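/- For a finite simple graph G, the number of acyclic orientations of G equals (-1)^{|V(G)|} times the chromatic polynomial of G evaluated at -1. -/

import Mathlib

/-- An orientation of a simple graph `G`, encoded as the edge set `d` of a digraph:
every edge of `G` is directed exactly one way, and only edges of `G` are directed. -/
def IsOrientation {V : Type*} (G : SimpleGraph V) (d : Set (V × V)) : Prop :=
  (∀ u v : V, ((u, v) ∈ d ∨ (v, u) ∈ d) ↔ G.Adj u v) ∧
    ∀ u v : V, (u, v) ∈ d → (v, u) ∉ d

/-- An orientation is acyclic if the resulting digraph has no directed cycle,
i.e. the transitive closure of the edge relation is irreflexive. -/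
def IsAcyclicOrientation {V : Type*} (G : SimpleGraph V) (d : Set (V × V)) : Prop :=
  IsOrientation G d ∧ ∀ v : V, ¬ Relation.TransGen (fun a b => (a, b) ∈ d) v v

namespace Stanley

open Relation

/-- The step relation of a digraph. -/
abbrev Rel {V : Type} (d : Set (V × V)) : V → V → Prop := fun a b => (a, b) ∈ d

lemma transGen_decomp {α : Type} {r r' : α → α → Prop} {a b x y : α}
    (hr' : ∀ p q, r' p q → r p q ∨ (p = a ∧ q = b))
    (h : TransGen r' x y) :
    TransGen r x y ∨ (ReflTransGen r x a ∧ ReflTransGen r b y) := by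
  induction h with
  | single h1 =>
    rcases hr' _ _ h1 with h1 | ⟨rfl, rfl⟩
    · exact Or.inl (TransGen.single h1)
    · exact Or.inr ⟨ReflTransGen.refl, ReflTransGen.refl⟩
  | tail h1 h2 ih =>
    rcases hr' _ _ h2 with h2 | ⟨rfl, rfl⟩
    · rcases ih with ih | ⟨ih1, ih2⟩
      · exact Or.inl (ih.tail h2)
      · exact Or.inr ⟨ih1, ih2.tail h2⟩
    · rcases ih with ih | ⟨ih1, ih2⟩
      · exact Or.inr ⟨ih.to_reflTransGen, ReflTransGen.refl⟩
      · exact Or.inr ⟨ih1, ReflTransGen.refl⟩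

section Defs

variable {V : Type}

/-- Number of proper colorings with `n` colors. -/
noncomputable def properCount (G : SimpleGraph V) (n : ℕ) : ℕ :=
  Nat.card {c : V → Fin n // ∀ u v : V, G.Adj u v → c u ≠ c v}

/-- Number of acyclic orientations. -/
noncomputable def acyCount (G : SimpleGraph V) : ℕ :=
  {d : Set (V × V) | IsAcyclicOrientation G d}.ncard

/-- Contraction of the edge `u v`: merge `v` into `u`. -/
@[reducible] def contract (G : SimpleGraph V) (u v : V) : SimpleGraph {x : V // x ≠ v} where
  Adj x y := x ≠ y ∧ (G.Adj x y ∨ ((x : V) = u ∧ G.Adj v y) ∨ ((y : V) = u ∧ G.Adj v x))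
  symm := by
    refine ⟨?_⟩
    rintro x y ⟨hxy, h⟩
    refine ⟨hxy.symm, ?_⟩
    rcases h with h | ⟨h1, h2⟩ | ⟨h1, h2⟩
    · exact Or.inl h.symm
    · exact Or.inr (Or.inr ⟨h1, h2⟩)
    · exact Or.inr (Or.inl ⟨h1, h2⟩)
  loopless := ⟨fun x hx => hx.1 rfl⟩

lemma del_adj (G : SimpleGraph V) (u v a b : V) :
    (G.deleteEdges {s(u, v)}).Adj a b ↔ G.Adj a b ∧ ¬((a = u ∧ b = v) ∨ (a = v ∧ b = u)) := by
  rw [SimpleGraph.deleteEdges_adj]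
  simp [Sym2.eq_iff]

end Defs

section Recursion

variable {V : Type} (G : SimpleGraph V) {u v : V} (huv : G.Adj u v)

lemma properCount_rec [Fintype V] (huv : G.Adj u v) (n : ℕ) :
    properCount (G.deleteEdges {s(u, v)}) n = properCount G n + properCount (contract G u v) n := by
  classical
  have hne : u ≠ v := huv.ne
  set G' := G.deleteEdges {s(u, v)} with hG'
  have hsplit : {c : V → Fin n | ∀ a b : V, G'.Adj a b → c a ≠ c b} =
      {c : V → Fin n | (∀ a b : V, G'.Adj a b → c a ≠ c b) ∧ c u ≠ c v} ∪
      {c : V → Fin n | (∀ a b : V, G'.Adj a b → c a ≠ c b) ∧ c u = c v} := by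
    ext c; simp only [Set.mem_setOf_eq, Set.mem_union]; tauto
  have hdisj : Disjoint {c : V → Fin n | (∀ a b : V, G'.Adj a b → c a ≠ c b) ∧ c u ≠ c v}
      {c : V → Fin n | (∀ a b : V, G'.Adj a b → c a ≠ c b) ∧ c u = c v} := by
    rw [Set.disjoint_left]; rintro c ⟨_, h1⟩ ⟨_, h2⟩; exact h1 h2
  have e1 : {c : V → Fin n // (∀ a b : V, G'.Adj a b → c a ≠ c b) ∧ c u ≠ c v} ≃
      {c : V → Fin n // ∀ a b : V, G.Adj a b → c a ≠ c b} := by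
    apply Equiv.subtypeEquivRight
    intro c
    constructor
    · rintro ⟨h1, h2⟩ a b hab
      by_cases he : (a = u ∧ b = v) ∨ (a = v ∧ b = u)
      · rcases he with ⟨ha, hb⟩ | ⟨ha, hb⟩
        · rw [ha, hb]; exact h2
        · rw [ha, hb]; exact fun hh => h2 hh.symm
      · exact h1 a b ((del_adj G u v a b).2 ⟨hab, he⟩)
    · intro h
      refine ⟨fun a b hab => h a b ((del_adj G u v a b).1 hab).1, h u v huv⟩
  have e2 : {c : V → Fin n // (∀ a b : V, G'.Adj a b → c a ≠ c b) ∧ c u = c v} ≃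
      {c : {x : V // x ≠ v} → Fin n // ∀ a b, (contract G u v).Adj a b → c a ≠ c b} := by
    refine ⟨fun c => ⟨fun x => c.1 x, ?_⟩,
      fun c => ⟨fun x => if hx : x = v then c.1 ⟨u, hne⟩ else c.1 ⟨x, hx⟩, ?_⟩, ?_, ?_⟩
    · -- restriction is proper for the contraction
      rintro ⟨x, hx⟩ ⟨y, hy⟩ ⟨hxy, hadj⟩
      have hxy' : x ≠ y := fun h => hxy (Subtype.ext h)
      obtain ⟨h1, h2⟩ := c.2
      show c.1 x ≠ c.1 y
      rcases hadj with h | ⟨hxu, h⟩ | ⟨hyu, h⟩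
      · refine h1 x y ((del_adj G u v x y).2 ⟨h, ?_⟩)
        rintro (⟨_, hb⟩ | ⟨ha, _⟩)
        · exact hy hb
        · exact hx ha
      · -- x = u, G.Adj v y
        have hxu : x = u := hxu
        have h' : G.Adj v y := h
        have hyu : y ≠ u := fun hh => hxy' (hxu.trans hh.symm)
        have key : c.1 v ≠ c.1 y := by
          refine h1 v y ((del_adj G u v v y).2 ⟨h', ?_⟩)
          rintro (⟨ha, _⟩ | ⟨_, hb⟩)
          · exact hne ha.symm
          · exact hyu hb
        rw [hxu, h2]; exact key
      · have hyu : y = u := hyu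
        have h' : G.Adj v x := h
        have hxu : x ≠ u := fun hh => hxy' (hh.trans hyu.symm)
        have key : c.1 v ≠ c.1 x := by
          refine h1 v x ((del_adj G u v v x).2 ⟨h', ?_⟩)
          rintro (⟨ha, _⟩ | ⟨_, hb⟩)
          · exact hne ha.symm
          · exact hxu hb
        rw [hyu, h2]; exact fun hh => key hh.symm
    · -- extension is proper for G' and c u = c v
      constructor
      · intro a b hab
        obtain ⟨hadj, hsne⟩ := (del_adj G u v a b).1 hab
        have hab' : a ≠ b := hadj.ne
        by_cases hav : a = v <;> by_cases hbv : b = v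
        · exact absurd (hav.trans hbv.symm) hab'
        · have hbu : b ≠ u := fun hh => hsne (Or.inr ⟨hav, hh⟩)
          simp only [dif_pos hav, dif_neg hbv]
          refine c.2 ⟨u, hne⟩ ⟨b, hbv⟩ ⟨fun hh => hbu (congrArg Subtype.val hh).symm, ?_⟩
          exact Or.inr (Or.inl ⟨rfl, hav ▸ hadj⟩)
        · have hau : a ≠ u := fun hh => hsne (Or.inl ⟨hh, hbv⟩)
          simp only [dif_pos hbv, dif_neg hav]
          refine c.2 ⟨a, hav⟩ ⟨u, hne⟩ ⟨fun hh => hau (congrArg Subtype.val hh), ?_⟩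
          exact Or.inr (Or.inr ⟨rfl, hbv ▸ hadj.symm⟩)
        · simp only [dif_neg hav, dif_neg hbv]
          exact c.2 ⟨a, hav⟩ ⟨b, hbv⟩ ⟨fun hh => hab' (congrArg Subtype.val hh),
            Or.inl hadj⟩
      · show (if h : u = v then _ else _) = (if h : v = v then _ else _)
        rw [dif_neg hne, dif_pos rfl]
    · rintro ⟨c, h1, h2⟩
      apply Subtype.ext
      funext x
      show (if hx : x = v then c u else c x) = c x
      by_cases hx : x = v
      · rw [dif_pos hx, hx]; exact h2
      · rw [dif_neg hx]
    · rintro ⟨c, hc⟩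
      apply Subtype.ext
      funext ⟨x, hx⟩
      show (if hx' : x = v then c ⟨u, hne⟩ else c ⟨x, hx'⟩) = c ⟨x, hx⟩
      rw [dif_neg hx]
  have f1 : ({c : V → Fin n | (∀ a b : V, G'.Adj a b → c a ≠ c b) ∧ c u ≠ c v}).ncard
      = properCount G n := by
    rw [← Nat.card_coe_set_eq]
    exact Nat.card_congr e1
  have f2 : ({c : V → Fin n | (∀ a b : V, G'.Adj a b → c a ≠ c b) ∧ c u = c v}).ncard
      = properCount (contract G u v) n := by
    rw [← Nat.card_coe_set_eq]
    exact Nat.card_congr e2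
  have hmain : properCount G' n
      = ({c : V → Fin n | ∀ a b : V, G'.Adj a b → c a ≠ c b}).ncard := by
    rw [← Nat.card_coe_set_eq]; rfl
  rw [hmain, hsplit, Set.ncard_union_eq hdisj (Set.toFinite _) (Set.toFinite _), f1, f2]

section Orient

variable {G : SimpleGraph V} {u v : V}

lemma orient_mem_adj {d : Set (V × V)} (hd : IsOrientation G d) {a b : V}
    (h : (a, b) ∈ d) : G.Adj a b :=
  (hd.1 a b).1 (Or.inl h)

lemma orientation_insert (huv : G.Adj u v) {d : Set (V × V)}
    (hd : IsOrientation (G.deleteEdges {s(u, v)}) d) :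
    IsOrientation G (insert (u, v) d) := by
  have hne : u ≠ v := huv.ne
  have hvu : (v, u) ∉ d := fun h => by
    have := (del_adj G u v v u).1 (orient_mem_adj hd h)
    exact this.2 (Or.inr ⟨rfl, rfl⟩)
  have huvd : (u, v) ∉ d := fun h => by
    have := (del_adj G u v u v).1 (orient_mem_adj hd h)
    exact this.2 (Or.inl ⟨rfl, rfl⟩)
  constructor
  · intro a b
    constructor
    · rintro (h | h)
      · rcases Set.mem_insert_iff.1 h with h | h
        · obtain ⟨h1, h2⟩ := Prod.mk.injEq .. ▸ h
          rw [h1, h2]; exact huv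
        · exact ((del_adj G u v a b).1 (orient_mem_adj hd h)).1
      · rcases Set.mem_insert_iff.1 h with h | h
        · obtain ⟨h1, h2⟩ := Prod.mk.injEq .. ▸ h
          rw [h1, h2]; exact huv.symm
        · exact (((del_adj G u v b a).1 (orient_mem_adj hd h)).1).symm
    · intro hab
      by_cases he : (a = u ∧ b = v) ∨ (a = v ∧ b = u)
      · rcases he with ⟨ha, hb⟩ | ⟨ha, hb⟩
        · rw [ha, hb]; exact Or.inl (Set.mem_insert _ _)
        · rw [ha, hb]; exact Or.inr (Set.mem_insert _ _)
      · rcases (hd.1 a b).2 ((del_adj G u v a b).2 ⟨hab, he⟩) with h | h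
        · exact Or.inl (Set.mem_insert_of_mem _ h)
        · exact Or.inr (Set.mem_insert_of_mem _ h)
  · intro a b hab hba
    rcases Set.mem_insert_iff.1 hab with h | h <;>
      rcases Set.mem_insert_iff.1 hba with h' | h'
    · obtain ⟨h1, h2⟩ := Prod.mk.injEq .. ▸ h
      obtain ⟨h3, h4⟩ := Prod.mk.injEq .. ▸ h'
      exact hne (h1.symm.trans h4)
    · obtain ⟨h1, h2⟩ := Prod.mk.injEq .. ▸ h
      exact hvu (by rw [← h2, ← h1]; exact h')
    · obtain ⟨h3, h4⟩ := Prod.mk.injEq .. ▸ h'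
      exact hvu (by rw [← h3, ← h4]; exact h)
    · exact hd.2 a b h h'

lemma acy_insert_iff (huv : G.Adj u v) {d : Set (V × V)}
    (hd : IsAcyclicOrientation (G.deleteEdges {s(u, v)}) d) :
    IsAcyclicOrientation G (insert (u, v) d) ↔ ¬ TransGen (Rel d) v u := by
  have hne : u ≠ v := huv.ne
  constructor
  · intro hacy htg
    exact hacy.2 v ((TransGen.mono (fun a b hab => Set.mem_insert_of_mem _ hab) _ _ htg).tail
      (Set.mem_insert _ _))
  · intro htg
    refine ⟨orientation_insert huv hd.1, ?_⟩
    intro z hz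
    have hr' : ∀ p q : V, Rel (insert (u, v) d) p q → Rel d p q ∨ (p = u ∧ q = v) := by
      intro p q hpq
      rcases Set.mem_insert_iff.1 hpq with h | h
      · obtain ⟨h1, h2⟩ := Prod.mk.injEq .. ▸ h
        exact Or.inr ⟨h1, h2⟩
      · exact Or.inl h
    rcases transGen_decomp hr' hz with h | ⟨h1, h2⟩
    · exact hd.2 z h
    · rcases reflTransGen_iff_eq_or_transGen.1 (h2.trans h1) with h | h
      · exact hne h
      · exact htg h

/-- Membership class of a vertex of the contraction. -/
def inC (u v : V) (x : {x : V // x ≠ v}) (a : V) : Prop :=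
  a = ↑x ∨ ((x : V) = u ∧ a = v)

/-- The pushforward of an orientation along the contraction of `u v`. -/
def push (u v : V) (d : Set (V × V)) : Set ({x : V // x ≠ v} × {x : V // x ≠ v}) :=
  {q | ((q.1 : V), (q.2 : V)) ∈ d ∨ ((q.1 : V) = u ∧ (v, (q.2 : V)) ∈ d) ∨
    ((q.2 : V) = u ∧ ((q.1 : V), v) ∈ d)}

lemma push_step {d : Set (V × V)} {x y : {x : V // x ≠ v}} (h : (x, y) ∈ push u v d) :
    ∃ a b : V, inC u v x a ∧ inC u v y b ∧ (a, b) ∈ d := by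
  rcases h with h | ⟨hx, h⟩ | ⟨hy, h⟩
  · exact ⟨_, _, Or.inl rfl, Or.inl rfl, h⟩
  · exact ⟨v, _, Or.inr ⟨hx, rfl⟩, Or.inl rfl, h⟩
  · exact ⟨_, v, Or.inl rfl, Or.inr ⟨hy, rfl⟩, h⟩

lemma inC_cases {x : {x : V // x ≠ v}} {b a' : V} (hb : inC u v x b) (ha' : inC u v x a') :
    b = a' ∨ (b = u ∧ a' = v) ∨ (b = v ∧ a' = u) := by
  rcases hb with hb | ⟨hxu, hb⟩ <;> rcases ha' with ha' | ⟨hxu', ha'⟩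
  · exact Or.inl (hb.trans ha'.symm)
  · exact Or.inr (Or.inl ⟨hb.trans hxu', ha'⟩)
  · exact Or.inr (Or.inr ⟨hb, ha'.trans hxu⟩)
  · exact Or.inl (hb.trans ha'.symm)

lemma lift_path (hne : u ≠ v) {d : Set (V × V)}
    {x y : {x : V // x ≠ v}}
    (hA : ∀ z : V, ¬ TransGen (Rel d) z z)
    (hnuv : ¬ TransGen (Rel d) u v) (hnvu : ¬ TransGen (Rel d) v u)
    (h : TransGen (Rel (push u v d)) x y) :
    (∃ a b : V, inC u v x a ∧ inC u v y b ∧ TransGen (Rel d) a b) ∨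
    (∃ a b : V, inC u v x a ∧ inC u v y b ∧ TransGen (Rel d) a u ∧ ReflTransGen (Rel d) v b) ∨
    (∃ a b : V, inC u v x a ∧ inC u v y b ∧ TransGen (Rel d) a v ∧ ReflTransGen (Rel d) u b) := by
  induction h with
  | single h1 =>
    obtain ⟨a, b, ha, hb, hd⟩ := push_step h1
    exact Or.inl ⟨a, b, ha, hb, TransGen.single hd⟩
  | tail h1 h2 ih =>
    obtain ⟨a', b', ha', hb', hd'⟩ := push_step h2
    rcases ih with ⟨a, b, ha, hb, htg⟩ | ⟨a, b, ha, hb, htg, hrt⟩ | ⟨a, b, ha, hb, htg, hrt⟩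
    · rcases inC_cases hb ha' with hba | ⟨hbu, hav⟩ | ⟨hbv, hau⟩
      · rw [hba] at htg
        exact Or.inl ⟨a, b', ha, hb', htg.tail hd'⟩
      · rw [hbu] at htg; rw [hav] at hd'
        exact Or.inr (Or.inl ⟨a, b', ha, hb', htg, ReflTransGen.single hd'⟩)
      · rw [hbv] at htg; rw [hau] at hd'
        exact Or.inr (Or.inr ⟨a, b', ha, hb', htg, ReflTransGen.single hd'⟩)
    · rcases inC_cases hb ha' with hba | ⟨hbu, hav⟩ | ⟨hbv, hau⟩
      · rw [← hba] at hd'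
        exact Or.inr (Or.inl ⟨a, b', ha, hb', htg, hrt.tail hd'⟩)
      · rw [hbu] at hrt
        rcases reflTransGen_iff_eq_or_transGen.1 hrt with h | h
        · exact absurd h hne
        · exact absurd h hnvu
      · rw [hau] at hd'
        exact Or.inl ⟨a, b', ha, hb', htg.tail hd'⟩
    · rcases inC_cases hb ha' with hba | ⟨hbu, hav⟩ | ⟨hbv, hau⟩
      · rw [← hba] at hd'
        exact Or.inr (Or.inr ⟨a, b', ha, hb', htg, hrt.tail hd'⟩)
      · rw [hav] at hd'
        exact Or.inl ⟨a, b', ha, hb', htg.tail hd'⟩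
      · rw [hbv] at hrt
        rcases reflTransGen_iff_eq_or_transGen.1 hrt with h | h
        · exact absurd h.symm hne
        · exact absurd h hnuv

lemma push_acyclic (hne : u ≠ v) {d : Set (V × V)}
    (hA : ∀ z : V, ¬ TransGen (Rel d) z z)
    (hnuv : ¬ TransGen (Rel d) u v) (hnvu : ¬ TransGen (Rel d) v u)
    (z : {x : V // x ≠ v}) : ¬ TransGen (Rel (push u v d)) z z := by
  intro hz
  rcases lift_path hne hA hnuv hnvu hz with
    ⟨a, b, ha, hb, htg⟩ | ⟨a, b, ha, hb, htg, hrt⟩ | ⟨a, b, ha, hb, htg, hrt⟩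
  · rcases ha with ha | ⟨hzu, hav⟩ <;> rcases hb with hb | ⟨hzu', hbv⟩
    · rw [ha, hb] at htg; exact hA _ htg
    · rw [ha, hzu', hbv] at htg; exact hnuv htg
    · rw [hav, hb, hzu] at htg; exact hnvu htg
    · rw [hav, hbv] at htg; exact hA v htg
  · rcases ha with ha | ⟨hzu, hav⟩
    · rcases hb with hb | ⟨hzu', hbv⟩
      · rw [ha] at htg; rw [hb] at hrt
        exact hnvu (TransGen.trans_right hrt htg)
      · rw [ha] at htg; rw [hzu'] at htg; exact hA u htg
    · rw [hav] at htg; exact hnvu htg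
  · rcases ha with ha | ⟨hzu, hav⟩
    · rcases hb with hb | ⟨hzu', hbv⟩
      · rw [ha] at htg; rw [hb] at hrt
        exact hnuv (TransGen.trans_right hrt htg)
      · rw [ha] at htg; rw [hzu'] at htg; exact hnuv htg
    · rw [hav] at htg; exact hA v htg

/-- The conditions on an acyclic orientation of `G - uv` making it correspond to
an acyclic orientation of the contraction. -/
def Good (G : SimpleGraph V) (u v : V) (d : Set (V × V)) : Prop :=
  IsAcyclicOrientation (G.deleteEdges {s(u, v)}) d ∧
    ¬ TransGen (Rel d) u v ∧ ¬ TransGen (Rel d) v u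

lemma mem_push {d : Set (V × V)} {x y : {x : V // x ≠ v}} :
    (x, y) ∈ push u v d ↔ ((x : V), (y : V)) ∈ d ∨ ((x : V) = u ∧ (v, (y : V)) ∈ d) ∨
      ((y : V) = u ∧ ((x : V), v) ∈ d) := Iff.rfl

lemma not_vu_mem {d : Set (V × V)} (hO : IsOrientation (G.deleteEdges {s(u, v)}) d) :
    (v, u) ∉ d := fun h =>
  ((del_adj G u v v u).1 (orient_mem_adj hO h)).2 (Or.inr ⟨rfl, rfl⟩)

lemma not_uv_mem {d : Set (V × V)} (hO : IsOrientation (G.deleteEdges {s(u, v)}) d) :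
    (u, v) ∉ d := fun h =>
  ((del_adj G u v u v).1 (orient_mem_adj hO h)).2 (Or.inl ⟨rfl, rfl⟩)

lemma push_isAcyclicOrientation (huv : G.Adj u v) {d : Set (V × V)} (hd : Good G u v d) :
    IsAcyclicOrientation (contract G u v) (push u v d) := by
  obtain ⟨⟨hO, hA⟩, hnuv, hnvu⟩ := hd
  have hne : u ≠ v := huv.ne
  have mk2 : ∀ p q r : V, (p, q) ∈ d → (q, r) ∈ d → TransGen (Rel d) p r :=
    fun p q r h1 h2 => (TransGen.single h1).tail h2
  refine ⟨⟨?_, ?_⟩, fun z => push_acyclic hne hA hnuv hnvu z⟩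
  · -- the push is an orientation of the contraction
    intro x y
    constructor
    · rintro (h | h)
      · rcases mem_push.1 h with h | ⟨hx, h⟩ | ⟨hy, h⟩
        · have hadj := (del_adj G u v _ _).1 (orient_mem_adj hO h)
          exact ⟨fun hh => hadj.1.ne (congrArg Subtype.val hh), Or.inl hadj.1⟩
        · have hadj := (del_adj G u v _ _).1 (orient_mem_adj hO h)
          have hyu : (y : V) ≠ u := fun hh => hadj.2 (Or.inr ⟨rfl, hh⟩)
          refine ⟨fun hh => hyu ?_, Or.inr (Or.inl ⟨hx, hadj.1⟩)⟩
          rw [← congrArg Subtype.val hh]; exact hx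
        · have hadj := (del_adj G u v _ _).1 (orient_mem_adj hO h)
          have hxu : (x : V) ≠ u := fun hh => hadj.2 (Or.inl ⟨hh, rfl⟩)
          refine ⟨fun hh => hxu ?_, Or.inr (Or.inr ⟨hy, hadj.1.symm⟩)⟩
          rw [congrArg Subtype.val hh]; exact hy
      · rcases mem_push.1 h with h | ⟨hy, h⟩ | ⟨hx, h⟩
        · have hadj := (del_adj G u v _ _).1 (orient_mem_adj hO h)
          exact ⟨fun hh => hadj.1.ne (congrArg Subtype.val hh).symm, Or.inl hadj.1.symm⟩
        · have hadj := (del_adj G u v _ _).1 (orient_mem_adj hO h)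
          have hxu : (x : V) ≠ u := fun hh => hadj.2 (Or.inr ⟨rfl, hh⟩)
          refine ⟨fun hh => hxu ?_, Or.inr (Or.inr ⟨hy, hadj.1⟩)⟩
          rw [congrArg Subtype.val hh]; exact hy
        · have hadj := (del_adj G u v _ _).1 (orient_mem_adj hO h)
          have hyu : (y : V) ≠ u := fun hh => hadj.2 (Or.inl ⟨hh, rfl⟩)
          refine ⟨fun hh => hyu ?_, Or.inr (Or.inl ⟨hx, hadj.1.symm⟩)⟩
          rw [← congrArg Subtype.val hh]; exact hx
    · rintro ⟨hxy, hadj | ⟨hxu, hvy⟩ | ⟨hyu, hvx⟩⟩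
      · have h' : (G.deleteEdges {s(u, v)}).Adj x y := by
          refine (del_adj G u v _ _).2 ⟨hadj, ?_⟩
          rintro (⟨_, hb⟩ | ⟨ha, _⟩)
          · exact y.2 hb
          · exact x.2 ha
        rcases (hO.1 _ _).2 h' with h | h
        · exact Or.inl (mem_push.2 (Or.inl h))
        · exact Or.inr (mem_push.2 (Or.inl h))
      · have hyu : (y : V) ≠ u := fun hh => hxy (Subtype.ext (hxu.trans hh.symm))
        have h' : (G.deleteEdges {s(u, v)}).Adj v (y : V) := by
          refine (del_adj G u v _ _).2 ⟨hvy, ?_⟩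
          rintro (⟨ha, _⟩ | ⟨_, hb⟩)
          · exact hne ha.symm
          · exact hyu hb
        rcases (hO.1 _ _).2 h' with h | h
        · exact Or.inl (mem_push.2 (Or.inr (Or.inl ⟨hxu, h⟩)))
        · exact Or.inr (mem_push.2 (Or.inr (Or.inr ⟨hxu, h⟩)))
      · have hxu : (x : V) ≠ u := fun hh => hxy (Subtype.ext (hh.trans hyu.symm))
        have h' : (G.deleteEdges {s(u, v)}).Adj v (x : V) := by
          refine (del_adj G u v _ _).2 ⟨hvx, ?_⟩
          rintro (⟨ha, _⟩ | ⟨_, hb⟩)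
          · exact hne ha.symm
          · exact hxu hb
        rcases (hO.1 _ _).2 h' with h | h
        · exact Or.inr (mem_push.2 (Or.inr (Or.inl ⟨hyu, h⟩)))
        · exact Or.inl (mem_push.2 (Or.inr (Or.inr ⟨hyu, h⟩)))
  · -- no two-cycles
    intro x y hxy hyx
    rcases mem_push.1 hxy with h1 | ⟨hxu, h1⟩ | ⟨hyu, h1⟩ <;>
      rcases mem_push.1 hyx with h2 | ⟨hyu', h2⟩ | ⟨hxu', h2⟩
    · exact hO.2 _ _ h1 h2
    · exact hnvu (by have := mk2 v _ _ h2 h1; rwa [hyu'] at this)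
    · exact hnuv (by have := mk2 _ _ v h1 h2; rwa [hxu'] at this)
    · exact hnvu (by have := mk2 v _ _ h1 h2; rwa [hxu] at this)
    · exact not_vu_mem hO (by rw [← hxu]; exact h2)
    · exact hO.2 _ _ h1 h2
    · exact hnuv (by have := mk2 _ _ v h2 h1; rwa [hyu] at this)
    · exact hO.2 _ _ h2 h1
    · exact not_uv_mem hO (by rw [← hxu']; exact h1)

lemma push_inj_sub (huv : G.Adj u v) {d₁ d₂ : Set (V × V)}
    (h1 : Good G u v d₁) (h2 : Good G u v d₂)
    (hpp : push u v d₁ = push u v d₂) : d₁ ⊆ d₂ := by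
  have hne : u ≠ v := huv.ne
  rintro ⟨a, b⟩ hab
  have hadj' := orient_mem_adj h1.1.1 hab
  have hdel := (del_adj G u v a b).1 hadj'
  have hab' : a ≠ b := hdel.1.ne
  by_cases hav : a = v
  · have hbv : b ≠ v := fun h => hab' (hav.trans h.symm)
    have hbu : b ≠ u := fun h => hdel.2 (Or.inr ⟨hav, h⟩)
    have hx : ((⟨u, hne⟩, ⟨b, hbv⟩) : {x : V // x ≠ v} × {x : V // x ≠ v}) ∈ push u v d₁ :=
      mem_push.2 (Or.inr (Or.inl ⟨rfl, show (v, b) ∈ d₁ from hav ▸ hab⟩))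
    rw [hpp] at hx
    rcases mem_push.1 hx with h | ⟨_, h⟩ | ⟨hyu, _⟩
    · have hadj2 : (G.deleteEdges {s(u, v)}).Adj v b := by rw [hav] at hadj'; exact hadj'
      rcases (h2.1.1.1 v b).2 hadj2 with h' | h'
      · rw [hav]; exact h'
      · exact absurd ((TransGen.single h).tail h') h2.2.1
    · rw [hav]; exact h
    · exact absurd hyu hbu
  · by_cases hbv : b = v
    · have hau : a ≠ u := fun h => hdel.2 (Or.inl ⟨h, hbv⟩)
      have hx : ((⟨a, hav⟩, ⟨u, hne⟩) : {x : V // x ≠ v} × {x : V // x ≠ v}) ∈ push u v d₁ :=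
        mem_push.2 (Or.inr (Or.inr ⟨rfl, show (a, v) ∈ d₁ from hbv ▸ hab⟩))
      rw [hpp] at hx
      rcases mem_push.1 hx with h | ⟨hxu, _⟩ | ⟨_, h⟩
      · have hadj2 : (G.deleteEdges {s(u, v)}).Adj a v := by rw [hbv] at hadj'; exact hadj'
        rcases (h2.1.1.1 a v).2 hadj2 with h' | h'
        · rw [hbv]; exact h'
        · exact absurd ((TransGen.single h').tail h) h2.2.2
      · exact absurd hxu hau
      · rw [hbv]; exact h
    · have hx : ((⟨a, hav⟩, ⟨b, hbv⟩) : {x : V // x ≠ v} × {x : V // x ≠ v}) ∈ push u v d₁ :=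
        mem_push.2 (Or.inl hab)
      rw [hpp] at hx
      rcases mem_push.1 hx with h | ⟨hxu, h⟩ | ⟨hyu, h⟩
      · exact h
      · have hxu' : a = u := hxu
        have hadj2 : (G.deleteEdges {s(u, v)}).Adj u b := by rw [hxu'] at hadj'; exact hadj'
        rcases (h2.1.1.1 u b).2 hadj2 with h' | h'
        · rw [hxu']; exact h'
        · exact absurd ((TransGen.single (show (v, b) ∈ d₂ from h)).tail h') h2.2.2
      · have hyu' : b = u := hyu
        have hadj2 : (G.deleteEdges {s(u, v)}).Adj a u := by rw [hyu'] at hadj'; exact hadj'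
        rcases (h2.1.1.1 a u).2 hadj2 with h' | h'
        · rw [hyu']; exact h'
        · exact absurd ((TransGen.single h').tail (show (a, v) ∈ d₂ from h)) h2.2.1
      
open Classical in
/-- Canonical projection onto the contracted vertex set. -/
noncomputable def proj (u : V) {v : V} (hne : u ≠ v) (a : V) : {x : V // x ≠ v} :=
  if h : a = v then ⟨u, hne⟩ else ⟨a, h⟩

lemma proj_of_ne {u v : V} (hne : u ≠ v) {a : V} (h : a ≠ v) : proj u hne a = ⟨a, h⟩ := by
  simp only [proj]; rw [dif_neg h]

lemma proj_v {u v : V} (hne : u ≠ v) : proj u hne v = ⟨u, hne⟩ := by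
  simp [proj]

lemma proj_coe {u v : V} (hne : u ≠ v) (x : {x : V // x ≠ v}) : proj u hne (x : V) = x :=
  proj_of_ne hne x.2

lemma proj_u {u v : V} (hne : u ≠ v) : proj u hne u = ⟨u, hne⟩ := proj_of_ne hne hne

/-- The pullback of an orientation of the contraction. -/
def pull (G : SimpleGraph V) (u : V) {v : V} (hne : u ≠ v)
    (dc : Set ({x : V // x ≠ v} × {x : V // x ≠ v})) : Set (V × V) :=
  {p | (G.deleteEdges {s(u, v)}).Adj p.1 p.2 ∧ (proj u hne p.1, proj u hne p.2) ∈ dc}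

lemma mem_pull {G : SimpleGraph V} {u v : V} {hne : u ≠ v}
    {dc : Set ({x : V // x ≠ v} × {x : V // x ≠ v})} {a b : V} :
    (a, b) ∈ pull G u hne dc ↔
      (G.deleteEdges {s(u, v)}).Adj a b ∧ (proj u hne a, proj u hne b) ∈ dc := Iff.rfl

lemma pull_good (huv : G.Adj u v) {dc : Set ({x : V // x ≠ v} × {x : V // x ≠ v})}
    (hdc : IsAcyclicOrientation (contract G u v) dc) : Good G u v (pull G u huv.ne dc) := by
  have hne : u ≠ v := huv.ne
  have hlift : ∀ a b : V, Rel (pull G u hne dc) a b →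
      Rel dc (proj u hne a) (proj u hne b) := fun a b h => h.2
  refine ⟨⟨⟨?_, ?_⟩, ?_⟩, ?_, ?_⟩
  · -- orientation condition
    intro a b
    constructor
    · rintro (h | h)
      · exact h.1
      · exact h.1.symm
    · intro hadj
      have hG := (del_adj G u v a b).1 hadj
      have hGc : (contract G u v).Adj (proj u hne a) (proj u hne b) := by
        by_cases hav : a = v
        · have hbv : b ≠ v := fun h => hG.1.ne (hav.trans h.symm)
          have hbu : b ≠ u := fun h => hG.2 (Or.inr ⟨hav, h⟩)
          rw [hav, proj_v, proj_of_ne hne hbv]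
          exact ⟨fun hh => hbu (congrArg Subtype.val hh).symm,
            Or.inr (Or.inl ⟨rfl, show G.Adj v b from hav ▸ hG.1⟩)⟩
        · by_cases hbv : b = v
          · have hau : a ≠ u := fun h => hG.2 (Or.inl ⟨h, hbv⟩)
            rw [hbv, proj_v, proj_of_ne hne hav]
            exact ⟨fun hh => hau (congrArg Subtype.val hh),
              Or.inr (Or.inr ⟨rfl, show G.Adj v a from hbv ▸ hG.1.symm⟩)⟩
          · rw [proj_of_ne hne hav, proj_of_ne hne hbv]
            exact ⟨fun hh => hG.1.ne (congrArg Subtype.val hh), Or.inl hG.1⟩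
      rcases (hdc.1.1 _ _).2 hGc with h | h
      · exact Or.inl ⟨hadj, h⟩
      · exact Or.inr ⟨hadj.symm, h⟩
  · -- no two-cycles
    intro a b h1 h2
    exact hdc.1.2 _ _ h1.2 h2.2
  · -- acyclic
    intro z hz
    exact hdc.2 (proj u hne z) (TransGen.lift (proj u hne) hlift _ _ hz)
  · -- no path u to v
    intro h
    have : TransGen (Rel dc) (proj u hne u) (proj u hne v) := TransGen.lift (p := Rel dc) (proj u hne) hlift _ _ h
    rw [proj_u hne, proj_v hne] at this
    exact hdc.2 _ this
  · intro h
    have : TransGen (Rel dc) (proj u hne v) (proj u hne u) := TransGen.lift (p := Rel dc) (proj u hne) hlift _ _ h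
    rw [proj_u hne, proj_v hne] at this
    exact hdc.2 _ this

lemma push_pull (huv : G.Adj u v) {dc : Set ({x : V // x ≠ v} × {x : V // x ≠ v})}
    (hdc : IsAcyclicOrientation (contract G u v) dc) :
    push u v (pull G u huv.ne dc) = dc := by
  have hne : u ≠ v := huv.ne
  ext ⟨x, y⟩
  constructor
  · intro h
    rcases mem_push.1 h with h | ⟨hxu, h⟩ | ⟨hyu, h⟩
    · have := h.2
      rwa [proj_coe, proj_coe] at this
    · have := h.2
      rw [proj_v, proj_coe] at this
      have hx : (⟨u, hne⟩ : {x : V // x ≠ v}) = x := Subtype.ext hxu.symm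
      rwa [hx] at this
    · have := h.2
      rw [proj_v, proj_coe] at this
      have hy : (⟨u, hne⟩ : {x : V // x ≠ v}) = y := Subtype.ext hyu.symm
      rwa [hy] at this
  · intro hxy
    have hGc : (contract G u v).Adj x y := (hdc.1.1 x y).1 (Or.inl hxy)
    obtain ⟨hxyne, hadj⟩ := hGc
    rcases hadj with hadj | ⟨hxu, hvy⟩ | ⟨hyu, hvx⟩
    · refine mem_push.2 (Or.inl (mem_pull.2 ⟨?_, ?_⟩))
      · refine (del_adj G u v _ _).2 ⟨hadj, ?_⟩
        rintro (⟨_, hb⟩ | ⟨ha, _⟩)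
        · exact y.2 hb
        · exact x.2 ha
      · rwa [proj_coe, proj_coe]
    · have hyu : (y : V) ≠ u := fun hh => hxyne (Subtype.ext (hxu.trans hh.symm))
      refine mem_push.2 (Or.inr (Or.inl ⟨hxu, mem_pull.2 ⟨?_, ?_⟩⟩))
      · refine (del_adj G u v _ _).2 ⟨hvy, ?_⟩
        rintro (⟨ha, _⟩ | ⟨_, hb⟩)
        · exact hne ha.symm
        · exact hyu hb
      · rw [proj_v, proj_coe]
        have hx : (⟨u, hne⟩ : {x : V // x ≠ v}) = x := Subtype.ext hxu.symm
        rwa [hx]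
    · have hxu : (x : V) ≠ u := fun hh => hxyne (Subtype.ext (hh.trans hyu.symm))
      refine mem_push.2 (Or.inr (Or.inr ⟨hyu, mem_pull.2 ⟨?_, ?_⟩⟩))
      · refine (del_adj G u v _ _).2 ⟨hvx.symm, ?_⟩
        rintro (⟨ha, _⟩ | ⟨_, hb⟩)
        · exact hxu ha
        · exact hne hb.symm
      · rw [proj_v, proj_coe]
        have hy : (⟨u, hne⟩ : {x : V // x ≠ v}) = y := Subtype.ext hyu.symm
        rwa [hy]

end Orient


lemma Sp_eq {G : SimpleGraph V} {u v : V} (huv : G.Adj u v) :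
    {d : Set (V × V) | IsAcyclicOrientation G d ∧ (u, v) ∈ d} =
      (fun d => insert (u, v) d) ''
        {d : Set (V × V) | IsAcyclicOrientation (G.deleteEdges {s(u, v)}) d ∧
          ¬ TransGen (Rel d) v u} := by
  ext d
  constructor
  · rintro ⟨hd, hmem⟩
    refine ⟨d \ {(u, v)}, ⟨⟨⟨?_, ?_⟩, ?_⟩, ?_⟩, ?_⟩
    · intro a b
      constructor
      · rintro (⟨h, hns⟩ | ⟨h, hns⟩)
        · refine (del_adj G u v a b).2 ⟨(hd.1.1 a b).1 (Or.inl h), ?_⟩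
          rintro (⟨ha, hb⟩ | ⟨ha, hb⟩)
          · exact hns (by rw [ha, hb]; rfl)
          · exact hd.1.2 u v hmem (by rw [← ha, ← hb]; exact h)
        · refine (del_adj G u v a b).2 ⟨(hd.1.1 a b).1 (Or.inr h), ?_⟩
          rintro (⟨ha, hb⟩ | ⟨ha, hb⟩)
          · exact hd.1.2 u v hmem (by rw [← ha, ← hb]; exact h)
          · exact hns (by rw [ha, hb]; rfl)
      · intro hadj
        obtain ⟨hG, hns⟩ := (del_adj G u v a b).1 hadj
        rcases (hd.1.1 a b).2 hG with h | h
        · refine Or.inl ⟨h, fun hh => hns ?_⟩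
          obtain ⟨h1, h2⟩ := Prod.mk.injEq .. ▸ (Set.mem_singleton_iff.1 hh)
          exact Or.inl ⟨h1, h2⟩
        · refine Or.inr ⟨h, fun hh => hns ?_⟩
          obtain ⟨h1, h2⟩ := Prod.mk.injEq .. ▸ (Set.mem_singleton_iff.1 hh)
          exact Or.inr ⟨h2, h1⟩
    · intro a b h h'
      exact hd.1.2 a b h.1 h'.1
    · intro z hz
      exact hd.2 z (TransGen.mono (fun a b hab => hab.1) _ _ hz)
    · intro htg
      exact hd.2 v ((TransGen.mono (fun a b hab => hab.1) _ _ htg).tail hmem)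
    · show insert (u, v) (d \ {(u, v)}) = d
      rw [Set.insert_diff_singleton, Set.insert_eq_self.2 hmem]
  · rintro ⟨d', ⟨hd', hntg⟩, rfl⟩
    exact ⟨(acy_insert_iff huv hd').2 hntg, Set.mem_insert _ _⟩

lemma insert_injOn {G : SimpleGraph V} {u v : V} :
    Set.InjOn (fun d : Set (V × V) => insert (u, v) d)
      {d : Set (V × V) | IsAcyclicOrientation (G.deleteEdges {s(u, v)}) d ∧
        ¬ TransGen (Rel d) v u} := by
  intro d₁ h₁ d₂ h₂ heq
  replace heq : insert (u, v) d₁ = insert (u, v) d₂ := heq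
  have h1 := not_uv_mem h₁.1.1
  have h2 := not_uv_mem h₂.1.1
  ext p
  constructor
  · intro hp
    have : p ∈ insert (u, v) d₂ := by rw [← heq]; exact Set.mem_insert_of_mem _ hp
    rcases Set.mem_insert_iff.1 this with h | h
    · exact absurd (h ▸ hp) h1
    · exact h
  · intro hp
    have : p ∈ insert (u, v) d₁ := by rw [heq]; exact Set.mem_insert_of_mem _ hp
    rcases Set.mem_insert_iff.1 this with h | h
    · exact absurd (h ▸ hp) h2
    · exact h

lemma acyCount_rec [Fintype V] {G : SimpleGraph V} {u v : V} (huv : G.Adj u v) :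
    acyCount G = acyCount (G.deleteEdges {s(u, v)}) + acyCount (contract G u v) := by
  classical
  have hne : u ≠ v := huv.ne
  have hswap : s(v, u) = s(u, v) := Sym2.eq_swap
  -- notation
  have hSsplit : {d : Set (V × V) | IsAcyclicOrientation G d} =
      {d : Set (V × V) | IsAcyclicOrientation G d ∧ (u, v) ∈ d} ∪
      {d : Set (V × V) | IsAcyclicOrientation G d ∧ (v, u) ∈ d} := by
    ext d
    constructor
    · intro hd
      rcases (hd.1.1 u v).2 huv with h | h
      · exact Or.inl ⟨hd, h⟩
      · exact Or.inr ⟨hd, h⟩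
    · rintro (⟨hd, _⟩ | ⟨hd, _⟩) <;> exact hd
  have hdisj : Disjoint {d : Set (V × V) | IsAcyclicOrientation G d ∧ (u, v) ∈ d}
      {d : Set (V × V) | IsAcyclicOrientation G d ∧ (v, u) ∈ d} := by
    rw [Set.disjoint_left]
    rintro d ⟨hd, h1⟩ ⟨_, h2⟩
    exact hd.1.2 u v h1 h2
  have hSpT := Sp_eq huv
  have hSmT := Sp_eq huv.symm
  rw [hswap] at hSmT
  have hinjp : Set.InjOn (fun d : Set (V × V) => insert (u, v) d)
      {d : Set (V × V) | IsAcyclicOrientation (G.deleteEdges {s(u, v)}) d ∧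
        ¬ TransGen (Rel d) v u} := insert_injOn
  have hinjm : Set.InjOn (fun d : Set (V × V) => insert (v, u) d)
      {d : Set (V × V) | IsAcyclicOrientation (G.deleteEdges {s(u, v)}) d ∧
        ¬ TransGen (Rel d) u v} := by
    have := @insert_injOn V G v u
    rwa [hswap] at this
  have hTunion : {d : Set (V × V) | IsAcyclicOrientation (G.deleteEdges {s(u, v)}) d ∧
        ¬ TransGen (Rel d) v u} ∪
      {d : Set (V × V) | IsAcyclicOrientation (G.deleteEdges {s(u, v)}) d ∧
        ¬ TransGen (Rel d) u v} =
      {d : Set (V × V) | IsAcyclicOrientation (G.deleteEdges {s(u, v)}) d} := by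
    ext d
    constructor
    · rintro (⟨hd, _⟩ | ⟨hd, _⟩) <;> exact hd
    · intro hd
      by_cases h1 : TransGen (Rel d) v u
      · by_cases h2 : TransGen (Rel d) u v
        · exact absurd (h2.trans h1) (hd.2 u)
        · exact Or.inr ⟨hd, h2⟩
      · exact Or.inl ⟨hd, h1⟩
  have hTinter : {d : Set (V × V) | IsAcyclicOrientation (G.deleteEdges {s(u, v)}) d ∧
        ¬ TransGen (Rel d) v u} ∩
      {d : Set (V × V) | IsAcyclicOrientation (G.deleteEdges {s(u, v)}) d ∧
        ¬ TransGen (Rel d) u v} =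
      {d : Set (V × V) | Good G u v d} := by
    ext d
    constructor
    · rintro ⟨⟨hd, h1⟩, ⟨_, h2⟩⟩
      exact ⟨hd, h2, h1⟩
    · rintro ⟨hd, h2, h1⟩
      exact ⟨⟨hd, h1⟩, ⟨hd, h2⟩⟩
  have himg : push u v '' {d : Set (V × V) | Good G u v d} =
      {dc | IsAcyclicOrientation (contract G u v) dc} := by
    apply Set.Subset.antisymm
    · rintro dc ⟨d, hd, rfl⟩
      exact push_isAcyclicOrientation huv hd
    · intro dc hdc
      exact ⟨pull G u huv.ne dc, pull_good huv hdc, push_pull huv hdc⟩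
  have hinjB : Set.InjOn (push u v) {d : Set (V × V) | Good G u v d} := by
    intro d₁ h₁ d₂ h₂ heq
    exact Set.Subset.antisymm (push_inj_sub huv h₁ h₂ heq) (push_inj_sub huv h₂ h₁ heq.symm)
  -- counting
  have e1 : acyCount G =
      ({d : Set (V × V) | IsAcyclicOrientation G d ∧ (u, v) ∈ d}).ncard +
      ({d : Set (V × V) | IsAcyclicOrientation G d ∧ (v, u) ∈ d}).ncard := by
    rw [acyCount, hSsplit, Set.ncard_union_eq hdisj (Set.toFinite _) (Set.toFinite _)]
  rw [e1, hSpT, hSmT, Set.ncard_image_of_injOn hinjp, Set.ncard_image_of_injOn hinjm]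
  have e2 := Set.ncard_union_add_ncard_inter
    {d : Set (V × V) | IsAcyclicOrientation (G.deleteEdges {s(u, v)}) d ∧
        ¬ TransGen (Rel d) v u}
    {d : Set (V × V) | IsAcyclicOrientation (G.deleteEdges {s(u, v)}) d ∧
        ¬ TransGen (Rel d) u v} (Set.toFinite _) (Set.toFinite _)
  rw [hTunion, hTinter] at e2
  have e3 : ({d : Set (V × V) | Good G u v d}).ncard = acyCount (contract G u v) := by
    rw [acyCount, ← himg, Set.ncard_image_of_injOn hinjB]
  rw [acyCount, ← e2, e3]

end Recursion

section Main

lemma transGen_empty {α : Type} {r : α → α → Prop} (hr : ∀ a b, ¬ r a b) {x y : α}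
    (h : TransGen r x y) : False := by
  induction h with
  | single h => exact hr _ _ h
  | tail _ h _ => exact hr _ _ h

lemma key_base {V : Type} [Fintype V] (G : SimpleGraph V) (hE : ∀ a b : V, ¬ G.Adj a b) :
    ∃ Q : Polynomial ℤ, (∀ n : ℕ, Q.eval (n : ℤ) = properCount G n) ∧
      ((acyCount G : ℤ) = (-1) ^ Fintype.card V * Q.eval (-1)) := by
  classical
  have hprop : ∀ n : ℕ, properCount G n = n ^ Fintype.card V := by
    intro n
    rw [properCount,
      Nat.card_congr (Equiv.subtypeUnivEquiv (fun c a b hab => absurd hab (hE a b))),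
      Nat.card_fun, Nat.card_eq_fintype_card, Nat.card_eq_fintype_card, Fintype.card_fin]
  have hacy : acyCount G = 1 := by
    have hset : {d : Set (V × V) | IsAcyclicOrientation G d} = {(∅ : Set (V × V))} := by
      ext d
      constructor
      · intro hd
        simp only [Set.mem_singleton_iff]
        ext ⟨a, b⟩
        simp only [Set.mem_empty_iff_false, iff_false]
        intro h
        exact hE a b ((hd.1.1 a b).1 (Or.inl h))
      · rintro rfl
        refine ⟨⟨fun a b => ⟨?_, ?_⟩, fun a b h => absurd h (Set.notMem_empty _)⟩, ?_⟩
        · rintro (h | h) <;> exact absurd h (Set.notMem_empty _)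
        · intro h
          exact absurd h (hE a b)
        · intro z hz
          exact transGen_empty (fun a b h => Set.notMem_empty _ h) hz
    rw [acyCount, hset, Set.ncard_singleton]
  refine ⟨Polynomial.X ^ Fintype.card V, ?_, ?_⟩
  · intro n
    rw [hprop n, Polynomial.eval_pow, Polynomial.eval_X]
    push_cast
    rfl
  · rw [hacy, Polynomial.eval_pow, Polynomial.eval_X, ← mul_pow]
    norm_num

lemma meas_del_lt {V : Type} [Fintype V] {G : SimpleGraph V} {u v : V} (huv : G.Adj u v) :
    {p : V × V | (G.deleteEdges {s(u, v)}).Adj p.1 p.2}.ncard <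
      {p : V × V | G.Adj p.1 p.2}.ncard := by
  apply Set.ncard_lt_ncard _ (Set.toFinite _)
  constructor
  · rintro ⟨a, b⟩ h
    exact ((del_adj G u v a b).1 h).1
  · intro hsub
    have := hsub (show (u, v) ∈ {p : V × V | G.Adj p.1 p.2} from huv)
    exact ((del_adj G u v u v).1 this).2 (Or.inl ⟨rfl, rfl⟩)

lemma meas_contract_lt {V : Type} [Fintype V] {G : SimpleGraph V} {u v : V}
    (huv : G.Adj u v) :
    {q : {x : V // x ≠ v} × {x : V // x ≠ v} | (contract G u v).Adj q.1 q.2}.ncard <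
      {p : V × V | G.Adj p.1 p.2}.ncard := by
  classical
  set g : {x : V // x ≠ v} × {x : V // x ≠ v} → V × V := fun q =>
    if G.Adj (q.1 : V) (q.2 : V) then ((q.1 : V), (q.2 : V))
    else if (q.1 : V) = u then (v, (q.2 : V)) else ((q.1 : V), v) with hg
  have himg : ∀ q ∈ {q : {x : V // x ≠ v} × {x : V // x ≠ v} | (contract G u v).Adj q.1 q.2},
      g q ∈ {p : V × V | G.Adj p.1 p.2} \ {(u, v)} := by
    rintro ⟨x, y⟩ hq
    obtain ⟨hxy, hadj⟩ := hq
    by_cases h1 : G.Adj (x : V) (y : V)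
    · simp only [hg, if_pos h1]
      exact ⟨h1, fun hh => y.2 (congrArg Prod.snd hh)⟩
    · by_cases h2 : (x : V) = u
      · simp only [hg, if_neg h1, if_pos h2]
        have hyu : (y : V) ≠ u := fun hh => hxy (Subtype.ext (h2.trans hh.symm))
        rcases hadj with h | ⟨_, h⟩ | ⟨h3, _⟩
        · exact absurd h h1
        · exact ⟨h, fun hh => huv.ne (congrArg Prod.fst hh).symm⟩
        · exact absurd h3 hyu
      · simp only [hg, if_neg h1, if_neg h2]
        rcases hadj with h | ⟨h3, _⟩ | ⟨_, h⟩
        · exact absurd h h1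
        · exact absurd h3 h2
        · exact ⟨h.symm, fun hh => h2 (congrArg Prod.fst hh)⟩
  have hinj : Set.InjOn g {q : {x : V // x ≠ v} × {x : V // x ≠ v} |
      (contract G u v).Adj q.1 q.2} := by
    rintro ⟨x, y⟩ hq ⟨x', y'⟩ hq' heq
    obtain ⟨hxy, hadj⟩ := hq
    obtain ⟨hxy', hadj'⟩ := hq'
    have husef : ∀ (a : {x : V // x ≠ v}) (b : {x : V // x ≠ v}),
        (contract G u v).Adj a b → ¬ G.Adj (a : V) (b : V) → (a : V) ≠ u → (b : V) = u := by
      rintro a b ⟨hab, h | ⟨h1, _⟩ | ⟨h1, _⟩⟩ hn hna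
      · exact absurd h hn
      · exact absurd h1 hna
      · exact h1
    by_cases h1 : G.Adj (x : V) (y : V) <;> by_cases h1' : G.Adj (x' : V) (y' : V)
    · simp only [hg, if_pos h1, if_pos h1', Prod.mk.injEq] at heq
      exact Prod.ext (Subtype.ext heq.1) (Subtype.ext heq.2)
    · by_cases h2' : (x' : V) = u
      · simp only [hg, if_pos h1, if_neg h1', if_pos h2', Prod.mk.injEq] at heq
        exact absurd heq.1 x.2
      · simp only [hg, if_pos h1, if_neg h1', if_neg h2', Prod.mk.injEq] at heq
        exact absurd heq.2 y.2
    · by_cases h2 : (x : V) = u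
      · simp only [hg, if_neg h1, if_pos h2, if_pos h1', Prod.mk.injEq] at heq
        exact absurd heq.1.symm x'.2
      · simp only [hg, if_neg h1, if_neg h2, if_pos h1', Prod.mk.injEq] at heq
        exact absurd heq.2.symm y'.2
    · by_cases h2 : (x : V) = u <;> by_cases h2' : (x' : V) = u
      · simp only [hg, if_neg h1, if_pos h2, if_neg h1', if_pos h2', Prod.mk.injEq] at heq
        refine Prod.ext (Subtype.ext (h2.trans h2'.symm)) (Subtype.ext heq.2)
      · simp only [hg, if_neg h1, if_pos h2, if_neg h1', if_neg h2', Prod.mk.injEq] at heq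
        exact absurd heq.1.symm x'.2
      · simp only [hg, if_neg h1, if_neg h2, if_neg h1', if_pos h2', Prod.mk.injEq] at heq
        exact absurd heq.1 x.2
      · simp only [hg, if_neg h1, if_neg h2, if_neg h1', if_neg h2', Prod.mk.injEq] at heq
        have hyu : (y : V) = u := husef x y ⟨hxy, hadj⟩ h1 h2
        have hyu' : (y' : V) = u := husef x' y' ⟨hxy', hadj'⟩ h1' h2'
        exact Prod.ext (Subtype.ext heq.1) (Subtype.ext (hyu.trans hyu'.symm))
  calc {q : {x : V // x ≠ v} × {x : V // x ≠ v} | (contract G u v).Adj q.1 q.2}.ncard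
      = (g '' {q : {x : V // x ≠ v} × {x : V // x ≠ v} |
          (contract G u v).Adj q.1 q.2}).ncard := (Set.ncard_image_of_injOn hinj).symm
    _ ≤ ({p : V × V | G.Adj p.1 p.2} \ {(u, v)}).ncard := by
        apply Set.ncard_le_ncard _ (Set.toFinite _)
        rintro p ⟨q, hq, rfl⟩
        exact himg q hq
    _ < {p : V × V | G.Adj p.1 p.2}.ncard := by
        apply Set.ncard_lt_ncard _ (Set.toFinite _)
        constructor
        · exact Set.diff_subset
        · intro hsub
          have := hsub (show (u, v) ∈ {p : V × V | G.Adj p.1 p.2} from huv)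
          exact this.2 rfl

lemma key : ∀ (m : ℕ) (V : Type) [Fintype V] (G : SimpleGraph V),
    {p : V × V | G.Adj p.1 p.2}.ncard ≤ m →
    ∃ Q : Polynomial ℤ, (∀ n : ℕ, Q.eval (n : ℤ) = properCount G n) ∧
      ((acyCount G : ℤ) = (-1) ^ Fintype.card V * Q.eval (-1)) := by
  intro m
  induction m with
  | zero =>
    intro V _ G hG
    refine key_base G ?_
    intro a b hab
    have hpos : 0 < {p : V × V | G.Adj p.1 p.2}.ncard :=
      (Set.ncard_pos (Set.toFinite _)).2 ⟨(a, b), hab⟩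
    omega
  | succ m ih =>
    intro V _ G hG
    classical
    by_cases hE : ∃ a b : V, G.Adj a b
    · obtain ⟨u, v, huv⟩ := hE
      have h1 : {p : V × V | (G.deleteEdges {s(u, v)}).Adj p.1 p.2}.ncard ≤ m := by
        have := meas_del_lt huv; omega
      have h2 : {q : {x : V // x ≠ v} × {x : V // x ≠ v} |
          (contract G u v).Adj q.1 q.2}.ncard ≤ m := by
        have := meas_contract_lt huv; omega
      obtain ⟨Q1, hQ1, hQ1'⟩ := ih V (G.deleteEdges {s(u, v)}) h1
      obtain ⟨Q2, hQ2, hQ2'⟩ := ih {x : V // x ≠ v} (contract G u v) h2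
      refine ⟨Q1 - Q2, ?_, ?_⟩
      · intro n
        have hrec : (properCount (G.deleteEdges {s(u, v)}) n : ℤ) =
            (properCount G n : ℤ) + (properCount (contract G u v) n : ℤ) := by
          exact_mod_cast congrArg (Nat.cast : ℕ → ℤ) (properCount_rec G huv n)
        rw [Polynomial.eval_sub, hQ1 n, hQ2 n]
        omega
      · have hrec : (acyCount G : ℤ) =
            (acyCount (G.deleteEdges {s(u, v)}) : ℤ) + (acyCount (contract G u v) : ℤ) := by
          exact_mod_cast congrArg (Nat.cast : ℕ → ℤ) (acyCount_rec huv)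
        have hcard : Fintype.card V = Fintype.card {x : V // x ≠ v} + 1 := by
          have hc1 : Fintype.card {x : V // ¬ x = v} = Fintype.card V -
              Fintype.card {x : V // x = v} := Fintype.card_subtype_compl _
          have hc2 : Fintype.card {x : V // x = v} = 1 := Fintype.card_subtype_eq v
          have hc3 : 0 < Fintype.card V := Fintype.card_pos_iff.2 ⟨v⟩
          have : Fintype.card {x : V // x ≠ v} = Fintype.card {x : V // ¬ x = v} := rfl
          omega
        rw [Polynomial.eval_sub, hrec, hQ1', hQ2', hcard, pow_succ]
        ring
    · push_neg at hE
      exact key_base G hE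

end Main



end Stanley

/-- Stanley's theorem: for a finite simple graph `G`, the number of acyclic orientations
of `G` equals `(-1)^{|V|}` times the chromatic polynomial of `G` evaluated at `-1`. -/
theorem stmt3 {V : Type} [Fintype V] (G : SimpleGraph V) (P : Polynomial ℤ)
    (hP : ∀ n : ℕ,
      P.eval (n : ℤ) =
        Nat.card {c : V → Fin n // ∀ u v : V, G.Adj u v → c u ≠ c v}) :
    ({d : Set (V × V) | IsAcyclicOrientation G d}.ncard : ℤ) =
      (-1) ^ Fintype.card V * P.eval (-1) := by
  classical
  obtain ⟨Q, hQ, hQ'⟩ := Stanley.key ({p : V × V | G.Adj p.1 p.2}.ncard) V G le_rfl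
  have hPQ : P = Q := by
    have hroot : ∀ n : ℕ, (P - Q).eval (n : ℤ) = 0 := by
      intro n
      rw [Polynomial.eval_sub, hP n, hQ n, Stanley.properCount, sub_self]
    by_contra hne
    have hinf : {x : ℤ | (P - Q).IsRoot x}.Infinite := by
      refine Set.infinite_of_injective_forall_mem (f := fun n : ℕ => (n : ℤ)) ?_ ?_
      · intro a b hab
        have hab' : (a : ℤ) = (b : ℤ) := hab
        exact_mod_cast hab'
      · intro n
        exact hroot n
    exact hne (sub_eq_zero.1 (Polynomial.eq_zero_of_infinite_isRoot _ hinf))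
  rw [hPQ]
  exact hQ'
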